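/- Every element of S can be written as a product α_1⋯α_kβ, where k ≥ 0, each α_i equals some λ_{p,q} or ρ_{p,q}, and β lies in the σ-generated copy of S_n. -/

import Mathlib

/-- A system of elements of a monoid `S` satisfying the defining relations
(1)–(17) of the presentation of the partial dual inverse symmetric monoid.
Indices are 0-based: `sg i`, `lm i`, `rh i` (for `i + 2 ≤ n`) correspond to the
paper's `σ_{i+1}`, `λ_{i+1}`, `ρ_{i+1}`, and `ee i` (for `i + 1 ≤ n`) to the
paper's `e_{i+1}`. -/
structure PipSystem (n : ℕ) (S : Type*) [Monoid S] where
  sg : ℕ → S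
  lm : ℕ → S
  rh : ℕ → S
  ee : ℕ → S
  rel1 : ∀ i, i + 2 ≤ n → sg i * sg i = 1
  rel2 : ∀ i j, i + 2 ≤ n → j + 2 ≤ n → i + 1 < j → sg i * sg j = sg j * sg i
  rel3 : ∀ i, i + 3 ≤ n → sg i * sg (i+1) * sg i = sg (i+1) * sg i * sg (i+1)
  rel4a : ∀ i j, i + 2 ≤ n → j + 2 ≤ n → i + 1 < j → lm i * lm j = lm j * lm i
  rel4b : ∀ i j, i + 2 ≤ n → j + 2 ≤ n → i + 1 < j → rh i * rh j = rh j * rh i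
  rel4c : ∀ i j, i + 2 ≤ n → j + 2 ≤ n → (i + 1 < j ∨ j + 1 < i) →
    rh i * lm j = lm j * rh i
  rel5a : ∀ i, i + 3 ≤ n → lm i * rh (i+1) = sg (i+1) * rh i * lm i * ee (i+2)
  rel5b : ∀ i, i + 3 ≤ n → lm i * rh (i+1) = sg i * rh (i+1) * sg i * lm i
  rel5c : ∀ i, i + 3 ≤ n → lm (i+1) * rh i = ee (i+2) * rh i * lm i * sg (i+1)
  rel5d : ∀ i, i + 3 ≤ n → lm (i+1) * rh i = rh i * sg i * lm (i+1) * sg i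
  rel6a : ∀ i, i + 3 ≤ n → rh i * lm (i+1) = rh i * ee (i+2)
  rel6b : ∀ i, i + 3 ≤ n → rh (i+1) * lm i = ee (i+2) * lm i
  rel7a : ∀ i, i + 2 ≤ n → lm i * rh i * lm i = lm i
  rel7b : ∀ i, i + 2 ≤ n → rh i * lm i * rh i = rh i
  rel8a : ∀ i, i + 3 ≤ n → sg i * lm (i+1) * sg i = sg (i+1) * lm i * sg (i+1)
  rel8b : ∀ i, i + 3 ≤ n → sg i * rh (i+1) * sg i = sg (i+1) * rh i * sg (i+1)
  rel9a : ∀ i, i + 2 ≤ n → lm i * sg i = lm i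
  rel9b : ∀ i, i + 2 ≤ n → sg i * rh i = rh i
  rel10a : ∀ i j, i + 2 ≤ n → j + 2 ≤ n → (i + 1 < j ∨ j + 1 < i) →
    sg i * lm j = lm j * sg i
  rel10b : ∀ i j, i + 2 ≤ n → j + 2 ≤ n → (i + 1 < j ∨ j + 1 < i) →
    sg i * rh j = rh j * sg i
  rel11a : ∀ i, i + 3 ≤ n → lm i * lm (i+1) = lm i * lm (i+1) * sg i
  rel11b : ∀ i, i + 3 ≤ n → lm i * lm (i+1) = sg (i+1) * (lm i * lm (i+1))
  rel11c : ∀ i, i + 3 ≤ n → rh (i+1) * rh i = sg i * (rh (i+1) * rh i)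
  rel11d : ∀ i, i + 3 ≤ n → rh (i+1) * rh i = rh (i+1) * rh i * sg (i+1)
  rel12a : ∀ i, i + 3 ≤ n → sg (i+1) * (lm (i+1) * lm i) = lm (i+1) * lm i
  rel12b : ∀ i, i + 3 ≤ n → lm (i+1) * lm i = lm i * ee (i+2)
  rel12c : ∀ i, i + 3 ≤ n → rh i * rh (i+1) * sg (i+1) = rh i * rh (i+1)
  rel12d : ∀ i, i + 3 ≤ n → rh i * rh (i+1) = ee (i+2) * rh i
  rel13a : ∀ i, i + 2 ≤ n → ee (i+1) = lm i * rh i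
  rel13b : ee 0 = sg 0 * ee 1 * sg 0
  rel14a : ∀ i, i + 1 ≤ n → ee i * ee i = ee i
  rel14b : ∀ i, i + 2 ≤ n → ee i * ee (i+1) = ee (i+1) * ee i
  rel14c : ∀ i, i + 2 ≤ n → ee i * ee (i+1) = lm i * lm i
  rel14d : ∀ i, i + 2 ≤ n → ee i * ee (i+1) = rh i * rh i
  rel14e : ∀ i, i + 2 ≤ n → ee i * ee (i+1) = rh i * sg i * lm i
  rel15a : ∀ i j, i + 1 ≤ n → j + 2 ≤ n → i ≠ j → i ≠ j + 1 →
    ee i * sg j = sg j * ee i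
  rel15b : ∀ i, i + 2 ≤ n → ee i * sg i = sg i * ee (i+1)
  rel15c : ∀ i, i + 2 ≤ n → sg i * ee i = ee (i+1) * sg i
  rel16a : ∀ i j, i + 1 ≤ n → j + 2 ≤ n → i ≠ j → i ≠ j + 1 →
    ee i * lm j = lm j * ee i
  rel16b : ∀ i, i + 2 ≤ n → ee (i+1) * lm i = lm i
  rel16c : ∀ i, i + 2 ≤ n → ee i * lm i = lm i * ee (i+1)
  rel16d : ∀ i, i + 2 ≤ n → ee i * lm i = lm i * ee i
  rel16e : ∀ i, i + 2 ≤ n → ee i * lm i = ee i * ee (i+1)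
  rel17a : ∀ i j, i + 1 ≤ n → j + 2 ≤ n → i ≠ j → i ≠ j + 1 →
    ee i * rh j = rh j * ee i
  rel17b : ∀ i, i + 2 ≤ n → rh i * ee (i+1) = rh i
  rel17c : ∀ i, i + 2 ≤ n → rh i * ee i = ee (i+1) * rh i
  rel17d : ∀ i, i + 2 ≤ n → rh i * ee i = ee i * rh i
  rel17e : ∀ i, i + 2 ≤ n → rh i * ee i = ee i * ee (i+1)

/-- Every element of `S` can be written as `α_1 ⋯ α_k β` where each `α_i` is
some `λ_{p,q}` or `ρ_{p,q}` and `β` lies in the σ-generated copy of `S_n`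
(here: is the image of a permutation under `f`). The hypothesis `hgen` says
that `S` is generated by the `σ_i`, `λ_i`, `ρ_i`, `e_i`. -/
theorem factorization_lambda_rho_perm
    {S : Type*} [Monoid S] {n : ℕ} (hn : 3 ≤ n) (P : PipSystem n S)
    (f : Equiv.Perm (Fin n) →* S)
    (hf : ∀ (i : ℕ) (h : i + 1 < n),
      f (Equiv.swap ⟨i, Nat.lt_of_succ_lt h⟩ ⟨i + 1, h⟩) = P.sg i)
    (lam rho : Fin n → Fin n → S) (E : Fin n → S)
    (hlam : ∀ (p q : Fin n) (π : Equiv.Perm (Fin n)),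
      π ⟨0, by omega⟩ = p → π ⟨1, by omega⟩ = q →
      lam p q = f π⁻¹ * P.lm 0 * f π)
    (hrho : ∀ (p q : Fin n) (π : Equiv.Perm (Fin n)),
      π ⟨0, by omega⟩ = p → π ⟨1, by omega⟩ = q →
      rho p q = f π⁻¹ * P.rh 0 * f π)
    (hE : ∀ (p : Fin n) (π : Equiv.Perm (Fin n)),
      π ⟨0, by omega⟩ = p → E p = f π⁻¹ * P.ee 0 * f π)
    (hgen : Submonoid.closure
      ({x : S | ∃ i, i + 2 ≤ n ∧ (x = P.sg i ∨ x = P.lm i ∨ x = P.rh i)} ∪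
       {x : S | ∃ i, i + 1 ≤ n ∧ x = P.ee i}) = ⊤) :
    ∀ s : S, ∃ (L : List S) (π : Equiv.Perm (Fin n)),
      (∀ x ∈ L, ∃ p q : Fin n, p ≠ q ∧ (x = lam p q ∨ x = rho p q)) ∧
      s = L.prod * f π := by
  have hne01 : (⟨0, by omega⟩ : Fin n) ≠ (⟨1, by omega⟩ : Fin n) := by
    simp [Fin.ext_iff]
  have cancel : ∀ g x y : S, g * g = 1 → g * x * g = y → x = g * y * g := by
    intro g x y hg hxy
    rw [← hxy]
    calc x = (g * g) * x * (g * g) := by rw [hg, one_mul, mul_one]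
    _ = g * (g * x * g) * g := by simp [mul_assoc]
  -- a permutation sending 0 ↦ p, 1 ↦ q
  have hperm : ∀ p q : Fin n, p ≠ q → ∃ π : Equiv.Perm (Fin n),
      π ⟨0, by omega⟩ = p ∧ π ⟨1, by omega⟩ = q := by
    intro p q hpq
    have hb' : p ≠ Equiv.swap (⟨0, by omega⟩ : Fin n) p ⟨1, by omega⟩ := by
      intro h
      have h2 : Equiv.swap (⟨0, by omega⟩ : Fin n) p ⟨0, by omega⟩ =
          Equiv.swap (⟨0, by omega⟩ : Fin n) p ⟨1, by omega⟩ := by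
        rw [Equiv.swap_apply_left]; exact h
      exact hne01 ((Equiv.swap (⟨0, by omega⟩ : Fin n) p).injective h2)
    refine ⟨Equiv.swap (Equiv.swap (⟨0, by omega⟩ : Fin n) p ⟨1, by omega⟩) q *
        Equiv.swap (⟨0, by omega⟩ : Fin n) p, ?_, ?_⟩
    · rw [Equiv.Perm.mul_apply, Equiv.swap_apply_left,
        Equiv.swap_apply_of_ne_of_ne hb' hpq]
    · rw [Equiv.Perm.mul_apply, Equiv.swap_apply_left]
  -- conjugating a single λ/ρ element by f π
  have conj1 : ∀ (x : S), (∃ p q : Fin n, p ≠ q ∧ (x = lam p q ∨ x = rho p q)) →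
      ∀ π : Equiv.Perm (Fin n),
      ∃ y, (∃ p q : Fin n, p ≠ q ∧ (y = lam p q ∨ y = rho p q)) ∧
        f π * x = y * f π := by
    rintro x ⟨p, q, hpq, hx⟩ π
    obtain ⟨π₀, h0, h1⟩ := hperm p q hpq
    have hinj : (π₀ * π⁻¹) ⟨0, by omega⟩ ≠ (π₀ * π⁻¹) ⟨1, by omega⟩ :=
      fun h => hne01 ((π₀ * π⁻¹).injective h)
    have e1 : f π * f π₀⁻¹ = f (π₀ * π⁻¹)⁻¹ := by
      rw [← map_mul]; congr 1
    have e2 : f (π₀ * π⁻¹) * f π = f π₀ := by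
      rw [← map_mul]; congr 1; group
    rcases hx with hx | hx
    · refine ⟨lam ((π₀ * π⁻¹) ⟨0, by omega⟩) ((π₀ * π⁻¹) ⟨1, by omega⟩),
        ⟨_, _, hinj, Or.inl rfl⟩, ?_⟩
      rw [hx, hlam p q π₀ h0 h1, hlam _ _ (π₀ * π⁻¹) rfl rfl]
      calc f π * (f π₀⁻¹ * P.lm 0 * f π₀)
          = f π * f π₀⁻¹ * P.lm 0 * f π₀ := by simp [mul_assoc]
        _ = f (π₀ * π⁻¹)⁻¹ * P.lm 0 * (f (π₀ * π⁻¹) * f π) := by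
            rw [e1, e2]
        _ = f (π₀ * π⁻¹)⁻¹ * P.lm 0 * f (π₀ * π⁻¹) * f π := by simp [mul_assoc]
    · refine ⟨rho ((π₀ * π⁻¹) ⟨0, by omega⟩) ((π₀ * π⁻¹) ⟨1, by omega⟩),
        ⟨_, _, hinj, Or.inr rfl⟩, ?_⟩
      rw [hx, hrho p q π₀ h0 h1, hrho _ _ (π₀ * π⁻¹) rfl rfl]
      calc f π * (f π₀⁻¹ * P.rh 0 * f π₀)
          = f π * f π₀⁻¹ * P.rh 0 * f π₀ := by simp [mul_assoc]
        _ = f (π₀ * π⁻¹)⁻¹ * P.rh 0 * (f (π₀ * π⁻¹) * f π) := by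
            rw [e1, e2]
        _ = f (π₀ * π⁻¹)⁻¹ * P.rh 0 * f (π₀ * π⁻¹) * f π := by simp [mul_assoc]
  -- conjugating a whole list
  have conjL : ∀ (M : List S) (π : Equiv.Perm (Fin n)),
      (∀ x ∈ M, ∃ p q : Fin n, p ≠ q ∧ (x = lam p q ∨ x = rho p q)) →
      ∃ M' : List S, (∀ x ∈ M', ∃ p q : Fin n, p ≠ q ∧ (x = lam p q ∨ x = rho p q)) ∧
        f π * M.prod = M'.prod * f π := by
    intro M
    induction M with
    | nil => intro π _; exact ⟨[], by simp, by simp⟩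
    | cons x M ih =>
      intro π hM
      obtain ⟨y, hy, hxy⟩ := conj1 x (hM x (by simp)) π
      obtain ⟨M', hM', hMM'⟩ := ih π (fun z hz => hM z (by simp [hz]))
      refine ⟨y :: M', ?_, ?_⟩
      · intro z hz
        rcases List.mem_cons.mp hz with h | h
        · exact h ▸ hy
        · exact hM' z h
      · rw [List.prod_cons, List.prod_cons, ← mul_assoc, hxy, mul_assoc, hMM',
          ← mul_assoc]
  -- the submonoid of factorizable elements
  let T : Submonoid S :=
    { carrier := {s | ∃ (L : List S) (π : Equiv.Perm (Fin n)),
        (∀ x ∈ L, ∃ p q : Fin n, p ≠ q ∧ (x = lam p q ∨ x = rho p q)) ∧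
        s = L.prod * f π}
      one_mem' := ⟨[], 1, by simp, by simp⟩
      mul_mem' := by
        rintro a b ⟨L, π, hL, rfl⟩ ⟨M, τ, hM, rfl⟩
        obtain ⟨M', hM', hc⟩ := conjL M π hM
        refine ⟨L ++ M', π * τ, ?_, ?_⟩
        · intro x hx
          rcases List.mem_append.mp hx with h | h
          exacts [hL x h, hM' x h]
        · rw [List.prod_append, map_mul]
          calc L.prod * f π * (M.prod * f τ)
              = L.prod * (f π * M.prod) * f τ := by simp [mul_assoc]
            _ = L.prod * (M'.prod * f π) * f τ := by rw [hc]
            _ = L.prod * M'.prod * (f π * f τ) := by simp [mul_assoc] }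
  have hmem : ∀ x : S, x ∈ T ↔ ∃ (L : List S) (π : Equiv.Perm (Fin n)),
      (∀ y ∈ L, ∃ p q : Fin n, p ≠ q ∧ (y = lam p q ∨ y = rho p q)) ∧
      x = L.prod * f π := fun _ => Iff.rfl
  -- σ generators
  have hsgT : ∀ i, i + 2 ≤ n → P.sg i ∈ T := by
    intro i hi
    have h : i + 1 < n := by omega
    exact (hmem _).mpr ⟨[], Equiv.swap ⟨i, Nat.lt_of_succ_lt h⟩ ⟨i + 1, h⟩,
      by simp, by rw [List.prod_nil, one_mul, hf i h]⟩
  -- λ_i and ρ_i are conjugates of λ_1, ρ_1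
  have hconjlr : ∀ i, i + 2 ≤ n → ∃ θ : Equiv.Perm (Fin n),
      P.lm i = f θ⁻¹ * P.lm 0 * f θ ∧ P.rh i = f θ⁻¹ * P.rh 0 * f θ := by
    intro i
    induction i with
    | zero => intro _; exact ⟨1, by simp, by simp⟩
    | succ j ih =>
      intro hj
      obtain ⟨θ, hl, hr⟩ := ih (by omega)
      have h0 : j + 1 < n := by omega
      have h1 : j + 1 + 1 < n := by omega
      set s0 : Equiv.Perm (Fin n) :=
        Equiv.swap ⟨j, Nat.lt_of_succ_lt h0⟩ ⟨j + 1, h0⟩ with hs0def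
      set s1 : Equiv.Perm (Fin n) :=
        Equiv.swap ⟨j + 1, Nat.lt_of_succ_lt h1⟩ ⟨j + 1 + 1, h1⟩ with hs1def
      have hfs0 : f s0 = P.sg j := hf j h0
      have hfs1 : f s1 = P.sg (j + 1) := hf (j + 1) h1
      have hi0 : s0⁻¹ = s0 := Equiv.swap_inv _ _
      have hi1 : s1⁻¹ = s1 := Equiv.swap_inv _ _
      have hexp : ∀ z : S, f (θ * s1 * s0)⁻¹ * z * f (θ * s1 * s0) =
          P.sg j * (P.sg (j + 1) * (f θ⁻¹ * z * f θ) * P.sg (j + 1)) * P.sg j := by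
        intro z
        rw [mul_inv_rev, mul_inv_rev, map_mul, map_mul, map_mul, map_mul,
          hi0, hi1, hfs0, hfs1]
        simp [mul_assoc]
      refine ⟨θ * s1 * s0, ?_, ?_⟩
      · have h8 : P.lm (j + 1) = P.sg j * (P.sg (j + 1) * P.lm j * P.sg (j + 1)) * P.sg j :=
          cancel _ _ _ (P.rel1 j (by omega)) (P.rel8a j hj)
        rw [h8, hl, hexp]
      · have h8 : P.rh (j + 1) = P.sg j * (P.sg (j + 1) * P.rh j * P.sg (j + 1)) * P.sg j :=
          cancel _ _ _ (P.rel1 j (by omega)) (P.rel8b j hj)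
        rw [h8, hr, hexp]
  have hlmT : ∀ i, i + 2 ≤ n → P.lm i ∈ T := by
    intro i hi
    obtain ⟨θ, hl, -⟩ := hconjlr i hi
    have hne : θ ⟨0, by omega⟩ ≠ θ ⟨1, by omega⟩ := fun h => hne01 (θ.injective h)
    refine (hmem _).mpr ⟨[lam (θ ⟨0, by omega⟩) (θ ⟨1, by omega⟩)], 1, ?_, ?_⟩
    · intro x hx
      rcases List.mem_singleton.mp hx with rfl
      exact ⟨_, _, hne, Or.inl rfl⟩
    · rw [List.prod_singleton, map_one, mul_one, hlam _ _ θ rfl rfl]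
      exact hl
  have hrhT : ∀ i, i + 2 ≤ n → P.rh i ∈ T := by
    intro i hi
    obtain ⟨θ, -, hr⟩ := hconjlr i hi
    have hne : θ ⟨0, by omega⟩ ≠ θ ⟨1, by omega⟩ := fun h => hne01 (θ.injective h)
    refine (hmem _).mpr ⟨[rho (θ ⟨0, by omega⟩) (θ ⟨1, by omega⟩)], 1, ?_, ?_⟩
    · intro x hx
      rcases List.mem_singleton.mp hx with rfl
      exact ⟨_, _, hne, Or.inr rfl⟩
    · rw [List.prod_singleton, map_one, mul_one, hrho _ _ θ rfl rfl]
      exact hr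
  have heeT : ∀ i, i + 1 ≤ n → P.ee i ∈ T := by
    intro i hi
    match i with
    | 0 =>
      have h13 : P.ee 0 = P.sg 0 * (P.lm 0 * P.rh 0) * P.sg 0 := by
        rw [P.rel13b, show P.ee 1 = P.lm 0 * P.rh 0 from P.rel13a 0 (by omega)]
      rw [h13]
      exact mul_mem (mul_mem (hsgT 0 (by omega))
        (mul_mem (hlmT 0 (by omega)) (hrhT 0 (by omega)))) (hsgT 0 (by omega))
    | j + 1 =>
      rw [P.rel13a j (by omega)]
      exact mul_mem (hlmT j (by omega)) (hrhT j (by omega))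
  have hsub : ({x : S | ∃ i, i + 2 ≤ n ∧ (x = P.sg i ∨ x = P.lm i ∨ x = P.rh i)} ∪
      {x : S | ∃ i, i + 1 ≤ n ∧ x = P.ee i}) ⊆ (T : Set S) := by
    rintro x (⟨i, hi, (rfl | rfl | rfl)⟩ | ⟨i, hi, rfl⟩)
    · exact hsgT i hi
    · exact hlmT i hi
    · exact hrhT i hi
    · exact heeT i hi
  have hle : (⊤ : Submonoid S) ≤ T := hgen ▸ Submonoid.closure_le.mpr hsub
  intro s
  exact (hmem s).mp (hle (Submonoid.mem_top s))
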